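/- Let Φ, R : X → [0,∞) and, for each N₁, N₂ ∈ ℕ, Φ_{N₁}, R_{N₂} : X → [0,∞) be Borel measurable. Assume: (a) for every r > 0 there is K(r) > 0, independent of N₁ and N₂, such that Φ(u), Φ_{N₁}(u), R(u), R_{N₂}(u) ≤ K(r) whenever ‖u‖_X < r; (b) μ₀({u : ‖u‖_X < r}) > 0 for every r > 0; (c) for every ε > 0 there exist sequences a_{N₁}(ε) → 0 and b_{N₂}(ε) → 0 of positive reals and a Borel set X_ε ⊆ X with μ₀(X_ε) ≥ 1 − ε such that |Φ(u) − Φ_{N₁}(u)| ≤ a_{N₁}(ε) and |R(u) − R_{N₂}(u)| ≤ b_{N₂}(ε) for all u ∈ X_ε and all N₁, N₂. Define μ by dμ/dμ₀ = Z^{−1} exp(−Φ − R) with Z = ∫_X exp(−Φ − R) dμ₀, and μ_{N₁,N₂} by dμ_{N₁,N₂}/dμ₀ = Z_{N₁,N₂}^{−1} exp(−Φ_{N₁} − R_{N₂}) with Z_{N₁,N₂} = ∫_X exp(−Φ_{N₁} − R_{N₂}) dμ₀. Then d_Hell(μ, μ_{N₁,N₂}) → 0 as N₁, N₂ → ∞.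 -/

import Mathlib

open MeasureTheory

/-- Normalization constant `Z = ∫_X exp(−F(u)) dμ₀(u)` for a potential `F`. -/
noncomputable def ZConst {X : Type*} [MeasurableSpace X] (μ₀ : Measure X) (F : X → ℝ) : ℝ :=
  ∫ u, Real.exp (-F u) ∂μ₀

/-- Density of the posterior measure with respect to `μ₀`: `Z⁻¹ exp(−F)`. -/
noncomputable def postDens {X : Type*} [MeasurableSpace X] (μ₀ : Measure X) (F : X → ℝ) :
    X → ℝ :=
  fun u => (ZConst μ₀ F)⁻¹ * Real.exp (-F u)

/-- Hellinger distance between two measures given by their densities `f = dμ/dμ₀`,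
`g = dμ'/dμ₀` with respect to `μ₀`:
`d_Hell = (½ ∫ (√f − √g)² dμ₀)^{1/2}`. -/
noncomputable def hellingerDist {X : Type*} [MeasurableSpace X] (μ₀ : Measure X)
    (f g : X → ℝ) : ℝ :=
  Real.sqrt ((1 / 2) * ∫ u, (Real.sqrt (f u) - Real.sqrt (g u)) ^ 2 ∂μ₀)

lemma aux_exp_lip {a b : ℝ} (ha : 0 ≤ a) (hb : 0 ≤ b) :
    |Real.exp (-a) - Real.exp (-b)| ≤ |a - b| := by
  wlog h : b ≤ a generalizing a b
  · rw [abs_sub_comm, abs_sub_comm a b]; exact this hb ha (le_of_not_ge h)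
  · have h1 := Real.add_one_le_exp (b - a)
    have h2 : Real.exp (-b) ≤ 1 := Real.exp_le_one_iff.mpr (by linarith)
    have h3 : Real.exp (-b) * Real.exp (b - a) = Real.exp (-a) := by
      rw [← Real.exp_add]; ring_nf
    have h4 : (0:ℝ) < Real.exp (b - a) := Real.exp_pos _
    have h5 : (0:ℝ) < Real.exp (-b) := Real.exp_pos _
    have h6 : Real.exp (-a) ≤ Real.exp (-b) := Real.exp_le_exp.mpr (by linarith)
    rw [abs_of_nonpos (by linarith), abs_of_nonneg (sub_nonneg.mpr h)]
    nlinarith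

lemma aux_exp_half_lip {a b : ℝ} (ha : 0 ≤ a) (hb : 0 ≤ b) :
    |Real.exp (-a / 2) - Real.exp (-b / 2)| ≤ |a - b| / 2 := by
  have h := aux_exp_lip (by linarith : (0:ℝ) ≤ a / 2) (by linarith : (0:ℝ) ≤ b / 2)
  rw [neg_div, neg_div] at *
  calc |Real.exp (-(a/2)) - Real.exp (-(b/2))| ≤ |a/2 - b/2| := h
    _ = |a - b| / 2 := by rw [show a/2 - b/2 = (a-b)/2 by ring, abs_div]; norm_num

lemma aux_exp_bdd {a b : ℝ} (ha : 0 ≤ a) (hb : 0 ≤ b) :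
    |Real.exp (-a) - Real.exp (-b)| ≤ 1 := by
  have h1 : Real.exp (-a) ≤ 1 := Real.exp_le_one_iff.mpr (by linarith)
  have h2 : Real.exp (-b) ≤ 1 := Real.exp_le_one_iff.mpr (by linarith)
  have h3 := Real.exp_pos (-a)
  have h4 := Real.exp_pos (-b)
  rw [abs_le]; constructor <;> linarith

lemma aux_sqrt_sq_sub {a b : ℝ} (ha : 0 ≤ a) (hb : 0 ≤ b) :
    (Real.sqrt a - Real.sqrt b) ^ 2 ≤ |a - b| := by
  wlog h : b ≤ a generalizing a b
  · rw [abs_sub_comm, show (Real.sqrt a - Real.sqrt b)^2 = (Real.sqrt b - Real.sqrt a)^2 by ring]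
    exact this hb ha (le_of_not_ge h)
  · rw [abs_of_nonneg (sub_nonneg.mpr h)]
    nlinarith [Real.sq_sqrt ha, Real.sq_sqrt hb, Real.sqrt_le_sqrt h,
      Real.sqrt_nonneg b, Real.sqrt_nonneg a]

lemma aux_sqrt_exp (x : ℝ) : Real.sqrt (Real.exp x) = Real.exp (x / 2) := by
  rw [show Real.exp x = (Real.exp (x / 2)) ^ 2 by rw [sq, ← Real.exp_add]; ring_nf]
  exact Real.sqrt_sq (Real.exp_pos _).le


section Aux

variable {X : Type*} [MeasurableSpace X] (μ₀ : Measure X) [IsProbabilityMeasure μ₀]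

lemma aux_integrable_of_bdd {f : X → ℝ} (hm : Measurable f) {C : ℝ} (h : ∀ u, |f u| ≤ C) :
    Integrable f μ₀ := by
  refine (integrable_const C).mono' hm.aestronglyMeasurable ?_
  filter_upwards with u using (Real.norm_eq_abs _ ▸ h u)

lemma aux_integrable_expNeg {F : X → ℝ} (hm : Measurable F) (h0 : ∀ u, 0 ≤ F u) :
    Integrable (fun u => Real.exp (-F u)) μ₀ := by
  refine aux_integrable_of_bdd μ₀ (hm.neg.exp) (C := 1) fun u => ?_
  rw [abs_of_pos (Real.exp_pos _)]
  exact Real.exp_le_one_iff.mpr (by simpa using h0 u)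

lemma aux_ZConst_le_one {F : X → ℝ} (hint : Integrable (fun u => Real.exp (-F u)) μ₀)
    (h0 : ∀ u, 0 ≤ F u) : ZConst μ₀ F ≤ 1 := by
  have : ZConst μ₀ F ≤ ∫ _u, (1:ℝ) ∂μ₀ := by
    refine integral_mono hint (integrable_const 1) fun u => ?_
    exact Real.exp_le_one_iff.mpr (by simpa using h0 u)
  simpa using this

lemma aux_le_ZConst {F : X → ℝ} (hint : Integrable (fun u => Real.exp (-F u)) μ₀)
    {s : Set X} (hs : MeasurableSet s) {c : ℝ} (hc : ∀ u ∈ s, F u ≤ c) :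
    Real.exp (-c) * (μ₀ s).toReal ≤ ZConst μ₀ F := by
  have h1 : Real.exp (-c) * (μ₀ s).toReal = ∫ _u in s, Real.exp (-c) ∂μ₀ := by
    rw [setIntegral_const]; rw [smul_eq_mul]; rw [measureReal_def]; ring
  rw [h1]
  refine le_trans (setIntegral_mono_on (integrableOn_const (measure_ne_top _ _))
    hint.integrableOn hs fun u hu => Real.exp_le_exp.mpr (by simpa using hc u hu)) ?_
  exact setIntegral_le_integral hint (Filter.Eventually.of_forall fun u => (Real.exp_pos _).le)

lemma aux_integral_split {h : X → ℝ} (hint : Integrable h μ₀)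
    {s : Set X} (hs : MeasurableSet s) {A B : ℝ} (hA : 0 ≤ A)
    (hsA : ∀ u ∈ s, h u ≤ A) (hB : ∀ u, h u ≤ B) :
    ∫ u, h u ∂μ₀ ≤ A + B * (μ₀ sᶜ).toReal := by
  have hsplit : ∫ u, h u ∂μ₀ = (∫ u in s, h u ∂μ₀) + ∫ u in sᶜ, h u ∂μ₀ :=
    (integral_add_compl hs hint).symm
  have h1 : ∫ u in s, h u ∂μ₀ ≤ A := by
    refine le_trans (setIntegral_mono_on hint.integrableOn
      (integrableOn_const (measure_ne_top _ _)) hs hsA) ?_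
    rw [setIntegral_const, smul_eq_mul, measureReal_def]
    have hle : (μ₀ s).toReal ≤ 1 := by
      have := ENNReal.toReal_mono (measure_ne_top μ₀ _) (measure_mono (Set.subset_univ s))
      simpa using this
    nlinarith [ENNReal.toReal_nonneg (a := μ₀ s)]
  have h2 : ∫ u in sᶜ, h u ∂μ₀ ≤ B * (μ₀ sᶜ).toReal := by
    refine le_trans (setIntegral_mono_on hint.integrableOn
      (integrableOn_const (measure_ne_top _ _)) hs.compl
      (fun u _ => hB u)) ?_
    rw [setIntegral_const, smul_eq_mul, measureReal_def]; ring_nf; exact le_refl _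
  linarith

end Aux

lemma aux_pt {A1 B1 e1 e2 Zi g : ℝ} (hA1 : A1 ^ 2 = Zi) (he2 : e2 ^ 2 = g) :
    (A1 * e1 - B1 * e2) ^ 2 ≤ 2 * Zi * (e1 - e2) ^ 2 + 2 * (A1 - B1) ^ 2 * g := by
  subst hA1 he2
  nlinarith [sq_nonneg (A1 * (e1 - e2) - (A1 - B1) * e2)]

set_option maxHeartbeats 1000000 in

set_option maxHeartbeats 1000000 in
/-- convergence of the finite-dimensional approximations of the posterior
measure: under uniform bounds on balls and convergence of the approximated potentials on
sets of large prior measure, `d_Hell(μ, μ_{N₁,N₂}) → 0` as `N₁, N₂ → ∞`. -/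
theorem posterior_approximation_convergence
    {X : Type*} [NormedAddCommGroup X] [InnerProductSpace ℝ X] [CompleteSpace X]
    [TopologicalSpace.SeparableSpace X] [MeasurableSpace X] [BorelSpace X]
    (μ₀ : Measure X) [IsProbabilityMeasure μ₀]
    (Φ R : X → ℝ) (Φn Rn : ℕ → X → ℝ)
    (hΦm : Measurable Φ) (hRm : Measurable R)
    (hΦnm : ∀ N, Measurable (Φn N)) (hRnm : ∀ N, Measurable (Rn N))
    (hΦ0 : ∀ u, 0 ≤ Φ u) (hR0 : ∀ u, 0 ≤ R u)
    (hΦn0 : ∀ N u, 0 ≤ Φn N u) (hRn0 : ∀ N u, 0 ≤ Rn N u)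
    (ha : ∀ r > (0 : ℝ), ∃ K > (0 : ℝ), ∀ u : X, ‖u‖ < r →
      Φ u ≤ K ∧ R u ≤ K ∧ (∀ N₁, Φn N₁ u ≤ K) ∧ (∀ N₂, Rn N₂ u ≤ K))
    (hb : ∀ r > (0 : ℝ), 0 < μ₀ {u : X | ‖u‖ < r})
    (hc : ∀ ε > (0 : ℝ), ∃ (aN bN : ℕ → ℝ) (Xe : Set X),
      MeasurableSet Xe ∧ (∀ N, 0 < aN N) ∧ (∀ N, 0 < bN N) ∧
      Filter.Tendsto aN Filter.atTop (nhds 0) ∧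
      Filter.Tendsto bN Filter.atTop (nhds 0) ∧
      ENNReal.ofReal (1 - ε) ≤ μ₀ Xe ∧
      ∀ u ∈ Xe, ∀ N₁ N₂ : ℕ, |Φ u - Φn N₁ u| ≤ aN N₁ ∧ |R u - Rn N₂ u| ≤ bN N₂) :
    Filter.Tendsto
      (fun N : ℕ × ℕ =>
        hellingerDist μ₀ (postDens μ₀ (fun u => Φ u + R u))
          (postDens μ₀ (fun u => Φn N.1 u + Rn N.2 u)))
      Filter.atTop (nhds 0) := by
  classical
  set F : X → ℝ := fun u => Φ u + R u with hFdef
  set G : ℕ × ℕ → X → ℝ := fun N u => Φn N.1 u + Rn N.2 u with hGdef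
  have hFm : Measurable F := hΦm.add hRm
  have hF0 : ∀ u, 0 ≤ F u := fun u => add_nonneg (hΦ0 u) (hR0 u)
  have hGm : ∀ N, Measurable (G N) := fun N => (hΦnm N.1).add (hRnm N.2)
  have hG0 : ∀ N u, 0 ≤ G N u := fun N u => add_nonneg (hΦn0 N.1 u) (hRn0 N.2 u)
  have hFi : Integrable (fun u => Real.exp (-F u)) μ₀ := aux_integrable_expNeg μ₀ hFm hF0
  have hGi : ∀ N, Integrable (fun u => Real.exp (-G N u)) μ₀ :=
    fun N => aux_integrable_expNeg μ₀ (hGm N) (hG0 N)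
  -- uniform lower bound for the normalisation constants
  obtain ⟨c0, hc0, hZF, hZG⟩ :
      ∃ c : ℝ, 0 < c ∧ c ≤ ZConst μ₀ F ∧ ∀ N, c ≤ ZConst μ₀ (G N) := by
    obtain ⟨K, hKpos, hK⟩ := ha 1 one_pos
    have hs : MeasurableSet {u : X | ‖u‖ < 1} :=
      measurableSet_lt measurable_norm measurable_const
    have hμs : 0 < (μ₀ {u : X | ‖u‖ < 1}).toReal :=
      ENNReal.toReal_pos (hb 1 one_pos).ne' (measure_ne_top _ _)
    refine ⟨Real.exp (-(2 * K)) * (μ₀ {u : X | ‖u‖ < 1}).toReal,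
      mul_pos (Real.exp_pos _) hμs, ?_, ?_⟩
    · refine aux_le_ZConst μ₀ hFi hs fun u hu => ?_
      obtain ⟨h1, h2, _, _⟩ := hK u hu
      simp only [hFdef]; linarith
    · intro N
      refine aux_le_ZConst μ₀ (hGi N) hs fun u hu => ?_
      obtain ⟨_, _, h3, h4⟩ := hK u hu
      have := h3 N.1; have := h4 N.2
      simp only [hGdef]; linarith
  have hZF1 : ZConst μ₀ F ≤ 1 := aux_ZConst_le_one μ₀ hFi hF0
  have hZG1 : ∀ N, ZConst μ₀ (G N) ≤ 1 := fun N => aux_ZConst_le_one μ₀ (hGi N) (hG0 N)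
  have hZFpos : 0 < ZConst μ₀ F := lt_of_lt_of_le hc0 hZF
  have hZGpos : ∀ N, 0 < ZConst μ₀ (G N) := fun N => lt_of_lt_of_le hc0 (hZG N)
  set I : ℕ × ℕ → ℝ := fun N =>
    ∫ u, (Real.sqrt (postDens μ₀ F u) - Real.sqrt (postDens μ₀ (G N) u)) ^ 2 ∂μ₀ with hIdef
  have hI0 : ∀ N, 0 ≤ I N := fun N => integral_nonneg fun u => sq_nonneg _
  have key : Filter.Tendsto I Filter.atTop (nhds 0) := by
    rw [NormedAddCommGroup.tendsto_nhds_zero]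
    intro δ hδ
    obtain ⟨D, hDdef, hD⟩ : ∃ D : ℝ, D = 2 * c0⁻¹ + 2 / c0 ^ 2 ∧ 0 < D :=
      ⟨_, rfl, by positivity⟩
    obtain ⟨ε, hεpos, hε1, hε2⟩ :
        ∃ ε : ℝ, 0 < ε ∧ ε ≤ 1 / 2 ∧ ε ≤ δ / (2 * (D + 1)) :=
      ⟨min (1 / 2) (δ / (2 * (D + 1))), lt_min (by norm_num) (by positivity),
        min_le_left _ _, min_le_right _ _⟩
    obtain ⟨aN, bN, Xe, hXe, haP, hbP, haT, hbT, hXeμ, hab⟩ := hc ε hεpos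
    -- measure of the complement
    have hcompl : (μ₀ Xeᶜ).toReal ≤ ε := by
      have h1 : μ₀ Xeᶜ = 1 - μ₀ Xe := by
        rw [measure_compl hXe (measure_ne_top _ _), measure_univ]
      have h2 : μ₀ Xeᶜ ≤ ENNReal.ofReal ε := by
        rw [h1]
        calc 1 - μ₀ Xe ≤ 1 - ENNReal.ofReal (1 - ε) := tsub_le_tsub_left hXeμ 1
          _ = ENNReal.ofReal 1 - ENNReal.ofReal (1 - ε) := by rw [ENNReal.ofReal_one]
          _ = ENNReal.ofReal (1 - (1 - ε)) := (ENNReal.ofReal_sub 1 (by linarith)).symm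
          _ = ENNReal.ofReal ε := by norm_num
      exact ENNReal.toReal_le_of_le_ofReal hεpos.le h2
    -- pointwise-in-N bound
    have hIB : ∀ N, I N ≤ 2 * c0⁻¹ * (((aN N.1 + bN N.2) / 2) ^ 2 + ε)
        + 2 * ((aN N.1 + bN N.2 + ε) / c0 ^ 2) := by
      intro N
      have ht0 : 0 ≤ aN N.1 + bN N.2 := add_nonneg (haP N.1).le (hbP N.2).le
      have hZpos : 0 < ZConst μ₀ F := hZFpos
      have hWpos : 0 < ZConst μ₀ (G N) := hZGpos N
      -- |F - G| ≤ t on Xe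
      have hFG : ∀ u ∈ Xe, |F u - G N u| ≤ aN N.1 + bN N.2 := by
        intro u hu
        obtain ⟨h1, h2⟩ := hab u hu N.1 N.2
        calc |F u - G N u| = |(Φ u - Φn N.1 u) + (R u - Rn N.2 u)| := by
              simp only [hFdef, hGdef]; ring_nf
          _ ≤ |Φ u - Φn N.1 u| + |R u - Rn N.2 u| := abs_add_le _ _
          _ ≤ aN N.1 + bN N.2 := add_le_add h1 h2
      -- |Z - W| ≤ t + ε
      have hZW : |ZConst μ₀ F - ZConst μ₀ (G N)| ≤ aN N.1 + bN N.2 + ε := by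
        have hsub : ZConst μ₀ F - ZConst μ₀ (G N)
            = ∫ u, (Real.exp (-F u) - Real.exp (-G N u)) ∂μ₀ :=
          (integral_sub hFi (hGi N)).symm
        have habs : |ZConst μ₀ F - ZConst μ₀ (G N)|
            ≤ ∫ u, |Real.exp (-F u) - Real.exp (-G N u)| ∂μ₀ := by
          rw [hsub]
          simpa [Real.norm_eq_abs] using
            norm_integral_le_integral_norm (μ := μ₀)
              (f := fun u => Real.exp (-F u) - Real.exp (-G N u))
        refine le_trans habs ?_
        have hint : Integrable (fun u => |Real.exp (-F u) - Real.exp (-G N u)|) μ₀ := by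
          refine aux_integrable_of_bdd μ₀ (((hFm.neg.exp).sub (hGm N).neg.exp).abs) (C := 1)
            fun u => ?_
          rw [abs_abs]; exact aux_exp_bdd (hF0 u) (hG0 N u)
        have hsp := aux_integral_split μ₀ hint hXe ht0
          (fun u hu => le_trans (aux_exp_lip (hF0 u) (hG0 N u)) (hFG u hu))
          (fun u => aux_exp_bdd (hF0 u) (hG0 N u))
        calc ∫ u, |Real.exp (-F u) - Real.exp (-G N u)| ∂μ₀
            ≤ (aN N.1 + bN N.2) + 1 * (μ₀ Xeᶜ).toReal := hsp
          _ ≤ aN N.1 + bN N.2 + ε := by linarith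
      -- J bound
      have hJm : Measurable (fun u => (Real.exp (-F u / 2) - Real.exp (-G N u / 2)) ^ 2) :=
        ((Real.measurable_exp.comp (hFm.neg.div_const 2)).sub
          (Real.measurable_exp.comp ((hGm N).neg.div_const 2))).pow_const 2
      have hJbd : ∀ u, (Real.exp (-F u / 2) - Real.exp (-G N u / 2)) ^ 2 ≤ 1 := by
        intro u
        have h1 : |Real.exp (-F u / 2) - Real.exp (-G N u / 2)| ≤ 1 := by
          have h2 := aux_exp_bdd (div_nonneg (hF0 u) (by norm_num) : (0:ℝ) ≤ F u / 2)
            (div_nonneg (hG0 N u) (by norm_num) : (0:ℝ) ≤ G N u / 2)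
          rw [neg_div, neg_div]; exact h2
        nlinarith [sq_abs (Real.exp (-F u / 2) - Real.exp (-G N u / 2)), abs_nonneg
          (Real.exp (-F u / 2) - Real.exp (-G N u / 2))]
      have hJi : Integrable (fun u => (Real.exp (-F u / 2) - Real.exp (-G N u / 2)) ^ 2) μ₀ :=
        aux_integrable_of_bdd μ₀ hJm (C := 1) fun u => by
          rw [abs_of_nonneg (sq_nonneg _)]; exact hJbd u
      have hJ : ∫ u, (Real.exp (-F u / 2) - Real.exp (-G N u / 2)) ^ 2 ∂μ₀
          ≤ ((aN N.1 + bN N.2) / 2) ^ 2 + ε := by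
        have hsp := aux_integral_split μ₀ hJi hXe
          (by positivity : (0:ℝ) ≤ ((aN N.1 + bN N.2) / 2) ^ 2)
          (fun u hu => by
            have h1 : |Real.exp (-F u / 2) - Real.exp (-G N u / 2)|
                ≤ (aN N.1 + bN N.2) / 2 := by
              refine le_trans (aux_exp_half_lip (hF0 u) (hG0 N u)) ?_
              have h2 := hFG u hu
              linarith
            nlinarith [sq_abs (Real.exp (-F u / 2) - Real.exp (-G N u / 2)),
              abs_nonneg (Real.exp (-F u / 2) - Real.exp (-G N u / 2))])
          hJbd
        calc ∫ u, (Real.exp (-F u / 2) - Real.exp (-G N u / 2)) ^ 2 ∂μ₀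
            ≤ ((aN N.1 + bN N.2) / 2) ^ 2 + 1 * (μ₀ Xeᶜ).toReal := hsp
          _ ≤ ((aN N.1 + bN N.2) / 2) ^ 2 + ε := by linarith
      -- pointwise bound for the Hellinger integrand
      have hpt : ∀ u, (Real.sqrt (postDens μ₀ F u) - Real.sqrt (postDens μ₀ (G N) u)) ^ 2
          ≤ 2 * (ZConst μ₀ F)⁻¹ * (Real.exp (-F u / 2) - Real.exp (-G N u / 2)) ^ 2
            + 2 * (Real.sqrt (ZConst μ₀ F)⁻¹ - Real.sqrt (ZConst μ₀ (G N))⁻¹) ^ 2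
              * Real.exp (-G N u) := by
        intro u
        have hsf : Real.sqrt (postDens μ₀ F u)
            = Real.sqrt (ZConst μ₀ F)⁻¹ * Real.exp (-F u / 2) := by
          rw [postDens, Real.sqrt_mul (by positivity : (0:ℝ) ≤ (ZConst μ₀ F)⁻¹), aux_sqrt_exp]
        have hsg : Real.sqrt (postDens μ₀ (G N) u)
            = Real.sqrt (ZConst μ₀ (G N))⁻¹ * Real.exp (-G N u / 2) := by
          rw [postDens, Real.sqrt_mul (by positivity : (0:ℝ) ≤ (ZConst μ₀ (G N))⁻¹),
            aux_sqrt_exp]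
        rw [hsf, hsg]
        exact aux_pt (Real.sq_sqrt (by positivity)) (by rw [sq, ← Real.exp_add]; ring_nf)
      -- integrability of the Hellinger integrand
      have hpm : Measurable (postDens μ₀ F) := measurable_const.mul (hFm.neg.exp)
      have hpmG : Measurable (postDens μ₀ (G N)) := measurable_const.mul ((hGm N).neg.exp)
      have hIint : Integrable (fun u =>
          (Real.sqrt (postDens μ₀ F u) - Real.sqrt (postDens μ₀ (G N) u)) ^ 2) μ₀ := by
        refine aux_integrable_of_bdd μ₀ ((hpm.sqrt.sub hpmG.sqrt).pow_const 2)
          (C := (Real.sqrt (ZConst μ₀ F)⁻¹ + Real.sqrt (ZConst μ₀ (G N))⁻¹) ^ 2) fun u => ?_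
        rw [abs_of_nonneg (sq_nonneg _)]
        have h1 : 0 ≤ Real.sqrt (postDens μ₀ F u) := Real.sqrt_nonneg _
        have h2 : 0 ≤ Real.sqrt (postDens μ₀ (G N) u) := Real.sqrt_nonneg _
        have h3 : Real.sqrt (postDens μ₀ F u) ≤ Real.sqrt (ZConst μ₀ F)⁻¹ := by
          apply Real.sqrt_le_sqrt
          rw [postDens]
          have h5 : Real.exp (-F u) ≤ 1 := Real.exp_le_one_iff.mpr (by simpa using hF0 u)
          nlinarith [inv_pos.mpr hZpos, Real.exp_pos (-F u)]
        have h4 : Real.sqrt (postDens μ₀ (G N) u) ≤ Real.sqrt (ZConst μ₀ (G N))⁻¹ := by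
          apply Real.sqrt_le_sqrt
          rw [postDens]
          have h5 : Real.exp (-G N u) ≤ 1 := Real.exp_le_one_iff.mpr (by simpa using hG0 N u)
          nlinarith [inv_pos.mpr hWpos, Real.exp_pos (-G N u)]
        nlinarith
      -- combine
      have hIle : I N ≤ 2 * (ZConst μ₀ F)⁻¹
            * (∫ u, (Real.exp (-F u / 2) - Real.exp (-G N u / 2)) ^ 2 ∂μ₀)
          + 2 * (Real.sqrt (ZConst μ₀ F)⁻¹ - Real.sqrt (ZConst μ₀ (G N))⁻¹) ^ 2
            * ZConst μ₀ (G N) := by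
        have hmono : I N ≤ ∫ u,
            (2 * (ZConst μ₀ F)⁻¹ * (Real.exp (-F u / 2) - Real.exp (-G N u / 2)) ^ 2
              + 2 * (Real.sqrt (ZConst μ₀ F)⁻¹ - Real.sqrt (ZConst μ₀ (G N))⁻¹) ^ 2
                * Real.exp (-G N u)) ∂μ₀ :=
          integral_mono hIint ((hJi.const_mul _).add ((hGi N).const_mul _)) hpt
        rw [integral_add (hJi.const_mul _) ((hGi N).const_mul _),
          integral_const_mul, integral_const_mul] at hmono
        exact hmono
      have hsqb : (Real.sqrt (ZConst μ₀ F)⁻¹ - Real.sqrt (ZConst μ₀ (G N))⁻¹) ^ 2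
          ≤ (aN N.1 + bN N.2 + ε) / c0 ^ 2 := by
        refine le_trans (aux_sqrt_sq_sub (by positivity) (by positivity)) ?_
        have h1 : |(ZConst μ₀ F)⁻¹ - (ZConst μ₀ (G N))⁻¹|
            = |ZConst μ₀ (G N) - ZConst μ₀ F| / (ZConst μ₀ F * ZConst μ₀ (G N)) := by
          rw [show (ZConst μ₀ F)⁻¹ - (ZConst μ₀ (G N))⁻¹
              = (ZConst μ₀ (G N) - ZConst μ₀ F) / (ZConst μ₀ F * ZConst μ₀ (G N)) by
            field_simp, abs_div, abs_of_pos (mul_pos hZpos hWpos)]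
        rw [h1, abs_sub_comm]
        refine div_le_div₀ (by linarith [ht0, hεpos.le]) hZW (by positivity) ?_
        rw [sq]; exact mul_le_mul hZF (hZG N) hc0.le hZpos.le
      have hZinv : (ZConst μ₀ F)⁻¹ ≤ c0⁻¹ := inv_anti₀ hc0 hZF
      have hJ0 : 0 ≤ ∫ u, (Real.exp (-F u / 2) - Real.exp (-G N u / 2)) ^ 2 ∂μ₀ :=
        integral_nonneg fun u => sq_nonneg _
      have hW1 : ZConst μ₀ (G N) ≤ 1 := hZG1 N
      have h5 : (0:ℝ) ≤ (Real.sqrt (ZConst μ₀ F)⁻¹ - Real.sqrt (ZConst μ₀ (G N))⁻¹) ^ 2 :=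
        sq_nonneg _
      have h6 : 0 < (ZConst μ₀ F)⁻¹ := inv_pos.mpr hZpos
      have h7 : (0:ℝ) < c0⁻¹ := inv_pos.mpr hc0
      have h8 : (0:ℝ) ≤ (aN N.1 + bN N.2 + ε) / c0 ^ 2 := by positivity
      refine le_trans hIle ?_
      nlinarith [mul_le_mul_of_nonneg_left hJ
          (le_of_lt (by positivity : (0:ℝ) < 2 * (ZConst μ₀ F)⁻¹)),
        mul_le_mul_of_nonneg_right hZinv
          (by positivity : (0:ℝ) ≤ ((aN N.1 + bN N.2) / 2) ^ 2 + ε),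
        mul_le_mul_of_nonneg_left hW1 (by linarith : (0:ℝ) ≤ 2 * (Real.sqrt (ZConst μ₀ F)⁻¹
          - Real.sqrt (ZConst μ₀ (G N))⁻¹) ^ 2),
        mul_le_mul_of_nonneg_left hsqb (by norm_num : (0:ℝ) ≤ 2)]
    -- the bound tends to a small limit
    have hfst : Filter.Tendsto (fun N : ℕ × ℕ => N.1) Filter.atTop Filter.atTop :=
      Filter.tendsto_atTop_atTop.mpr fun b => ⟨(b, b), fun a hab => hab.1⟩
    have hsnd : Filter.Tendsto (fun N : ℕ × ℕ => N.2) Filter.atTop Filter.atTop :=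
      Filter.tendsto_atTop_atTop.mpr fun b => ⟨(b, b), fun a hab => hab.2⟩
    have htT : Filter.Tendsto (fun N : ℕ × ℕ => aN N.1 + bN N.2) Filter.atTop (nhds 0) := by
      have h := (haT.comp hfst).add (hbT.comp hsnd)
      simpa using h
    have hcont : Continuous (fun x : ℝ =>
        2 * c0⁻¹ * ((x / 2) ^ 2 + ε) + 2 * ((x + ε) / c0 ^ 2)) := by fun_prop
    have hBT : Filter.Tendsto (fun N : ℕ × ℕ =>
          2 * c0⁻¹ * (((aN N.1 + bN N.2) / 2) ^ 2 + ε)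
            + 2 * ((aN N.1 + bN N.2 + ε) / c0 ^ 2))
        Filter.atTop
        (nhds (2 * c0⁻¹ * (((0:ℝ) / 2) ^ 2 + ε) + 2 * ((0 + ε) / c0 ^ 2))) :=
      (hcont.tendsto 0).comp htT
    have hLδ : 2 * c0⁻¹ * (((0:ℝ) / 2) ^ 2 + ε) + 2 * ((0 + ε) / c0 ^ 2) < δ := by
      have h1 : 2 * c0⁻¹ * (((0:ℝ) / 2) ^ 2 + ε) + 2 * ((0 + ε) / c0 ^ 2) = ε * D := by
        rw [hDdef]; field_simp; ring
      rw [h1]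
      have h2 : ε * (2 * (D + 1)) ≤ δ := by
        rw [← le_div_iff₀ (by positivity)]; exact hε2
      nlinarith
    have hBδ : ∀ᶠ N in (Filter.atTop : Filter (ℕ × ℕ)),
        2 * c0⁻¹ * (((aN N.1 + bN N.2) / 2) ^ 2 + ε)
          + 2 * ((aN N.1 + bN N.2 + ε) / c0 ^ 2) < δ :=
      hBT.eventually_lt_const hLδ
    filter_upwards [hBδ] with N hN
    rw [Real.norm_eq_abs, abs_of_nonneg (hI0 N)]
    exact lt_of_le_of_lt (hIB N) hN
  -- conclude via continuity of sqrt
  have hhalf : Filter.Tendsto (fun N => (1/2 : ℝ) * I N) Filter.atTop (nhds 0) := by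
    have h := key.const_mul (1/2 : ℝ)
    simpa using h
  have hfin : Filter.Tendsto (fun N => Real.sqrt ((1/2 : ℝ) * I N)) Filter.atTop (nhds 0) := by
    have h := (Real.continuous_sqrt.tendsto' 0 0 Real.sqrt_zero).comp hhalf
    exact h
  exact hfin
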